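/- If G is a nontrivial finite group with trivial center Z(G) = 1, then |G| ≥ 2·k(G), where k(G) is the number of conjugacy classes of G; moreover, equality |G| = 2·k(G) holds if and only if G is isomorphic to the symmetric group S₃. -/

import Mathlib

open ConjClasses MulAction Subgroup

section Aux
set_option linter.unusedSectionVars false
variable {G : Type} [Group G] [Finite G]

omit [Finite G] in
lemma aux_ncard_eq_index (g : G) :
    (ConjClasses.mk g).carrier.ncard = (stabilizer (ConjAct G) g).index := by
  rw [MulAction.index_stabilizer, ConjAct.orbit_eq_carrier_conjClasses]

lemma aux_ncard_dvd (c : ConjClasses G) : c.carrier.ncard ∣ Nat.card G := by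
  obtain ⟨g, rfl⟩ := ConjClasses.exists_rep c
  rw [aux_ncard_eq_index]
  exact (stabilizer (ConjAct G) g).index_dvd_card

lemma aux_one_le (c : ConjClasses G) : 1 ≤ c.carrier.ncard := by
  obtain ⟨g, rfl⟩ := ConjClasses.exists_rep c
  exact (Set.ncard_pos (Set.toFinite _)).2 ⟨g, ConjClasses.mem_carrier_mk⟩

lemma aux_eq_one_class (h : Subgroup.center G = ⊥) (c : ConjClasses G)
    (hc : c.carrier.ncard ≤ 1) : c = ConjClasses.mk (1 : G) := by
  have hsub : c.carrier.Subsingleton := by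
    intro a ha b hb
    exact (Set.ncard_le_one_iff (Set.toFinite _)).1 hc ha hb
  have hcompl : c ∈ (noncenter G)ᶜ := by
    simp only [Set.mem_compl_iff, mem_noncenter, Set.not_nontrivial_iff]
    exact hsub
  obtain ⟨g, hg, rfl⟩ := (ConjClasses.mk_bijOn G).surjOn hcompl
  rw [SetLike.mem_coe, h, Subgroup.mem_bot] at hg
  rw [hg]

lemma aux_mk_one_ncard : (ConjClasses.mk (1 : G)).carrier.ncard = 1 := by
  have : (ConjClasses.mk (1 : G)).carrier = {1} := by
    ext x
    simp [ConjClasses.mem_carrier_iff_mk_eq, ConjClasses.mk_eq_mk_iff_isConj, isConj_one_left]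
  rw [this, Set.ncard_singleton]

end Aux

lemma aux_all_eq_two {α : Type} (s : Finset α) (f : α → ℕ) (h2 : ∀ c ∈ s, 2 ≤ f c)
    (hsum : ∑ c ∈ s, f c = 2 * s.card) : ∀ c ∈ s, f c = 2 := by
  by_contra hc
  push_neg at hc
  obtain ⟨c, hcs, hne⟩ := hc
  have hlt : ∑ _c ∈ s, 2 < ∑ c ∈ s, f c :=
    Finset.sum_lt_sum h2 ⟨c, hcs, lt_of_le_of_ne (h2 c hcs) (Ne.symm hne)⟩
  rw [Finset.sum_const, smul_eq_mul, hsum, mul_comm] at hlt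
  omega

lemma aux_main (G : Type) [Group G] [Finite G] [Nontrivial G] (h : Subgroup.center G = ⊥) :
    2 * Nat.card (ConjClasses G) ≤ Nat.card G ∧
    (Nat.card G = 2 * Nat.card (ConjClasses G) →
      ∃ c0 : ConjClasses G, c0.carrier.ncard = 3 ∧
        ∀ c : ConjClasses G, c ≠ ConjClasses.mk 1 → c ≠ c0 → c.carrier.ncard = 2) := by
  classical
  have _i : Fintype (ConjClasses G) := Fintype.ofFinite _
  set n := Nat.card G with hn
  set k := Nat.card (ConjClasses G) with hk
  have hkcard : k = Finset.univ.card (α := ConjClasses G) := by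
    rw [hk, Nat.card_eq_fintype_card, Fintype.card]
  set f : ConjClasses G → ℕ := fun c => c.carrier.ncard with hf
  have hsumall : ∑ c : ConjClasses G, f c = n := by
    rw [hn, ← Group.sum_card_conj_classes_eq_card, finsum_eq_sum_of_fintype]
  set s : Finset (ConjClasses G) := Finset.univ.erase (ConjClasses.mk (1 : G)) with hs
  have hmem1 : (ConjClasses.mk (1 : G)) ∈ (Finset.univ : Finset (ConjClasses G)) :=
    Finset.mem_univ _
  have hsum : 1 + ∑ c ∈ s, f c = n := by
    rw [← hsumall, ← Finset.add_sum_erase _ f hmem1]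
    congr 1
    exact aux_mk_one_ncard.symm
  have hscard : s.card + 1 = k := by
    rw [hkcard, hs, Finset.card_erase_of_mem hmem1]
    have : 0 < Finset.univ.card (α := ConjClasses G) := Finset.card_pos.2 ⟨_, hmem1⟩
    omega
  have h2 : ∀ c ∈ s, 2 ≤ f c := by
    intro c hcs
    have hne : c ≠ ConjClasses.mk 1 := (Finset.mem_erase.1 hcs).1
    have h1 : 1 ≤ f c := aux_one_le c
    by_contra hlt
    refine hne (aux_eq_one_class h c (show f c ≤ 1 by omega))
  have hdvd : ∀ c : ConjClasses G, f c ∣ n := fun c => aux_ncard_dvd c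
  -- k ≥ 2
  have hk2 : 2 ≤ k := by
    obtain ⟨g, hg⟩ := exists_ne (1 : G)
    have : ConjClasses.mk g ≠ ConjClasses.mk (1 : G) := by
      rw [Ne, ConjClasses.mk_eq_mk_iff_isConj, isConj_one_left]
      exact hg
    have : s.Nonempty :=
      ⟨ConjClasses.mk g, Finset.mem_erase.2 ⟨this, Finset.mem_univ _⟩⟩
    have := Finset.card_pos.2 this
    omega
  have hlower : 2 * s.card ≤ ∑ c ∈ s, f c := by
    calc 2 * s.card = ∑ _c ∈ s, 2 := by rw [Finset.sum_const, smul_eq_mul, mul_comm]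
    _ ≤ ∑ c ∈ s, f c := Finset.sum_le_sum h2
  constructor
  · -- inequality
    by_contra hlt
    push_neg at hlt
    -- then n = 2k - 1 and all sizes are 2
    have hneq : ∑ c ∈ s, f c = 2 * s.card := by omega
    have hall := aux_all_eq_two s f h2 hneq
    obtain ⟨c, hcs⟩ : s.Nonempty := Finset.card_pos.1 (by omega)
    have hd2 : f c ∣ n := hdvd c
    rw [hall c hcs] at hd2
    omega
  · intro heq
    -- find odd class
    have hodd : ∃ c0 ∈ s, ¬ Even (f c0) := by
      by_contra hev
      push_neg at hev
      have : Even (∑ c ∈ s, f c) := Finset.even_sum _ hev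
      obtain ⟨m, hm⟩ := this
      omega
    obtain ⟨c0, hc0s, hc0odd⟩ := hodd
    have hc03 : 3 ≤ f c0 := by
      have := h2 c0 hc0s
      rcases Nat.even_or_odd (f c0) with he | ho
      · exact absurd he hc0odd
      · obtain ⟨m, hm⟩ := ho; omega
    set t := s.erase c0 with ht
    have htmem : ∀ c ∈ t, 2 ≤ f c := fun c hc => h2 c (Finset.mem_of_mem_erase hc)
    have htsum : f c0 + ∑ c ∈ t, f c = ∑ c ∈ s, f c := Finset.add_sum_erase _ f hc0s
    have htcard : t.card + 1 = s.card := by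
      rw [ht, Finset.card_erase_of_mem hc0s]
      have : 0 < s.card := Finset.card_pos.2 ⟨c0, hc0s⟩
      omega
    have htlower : 2 * t.card ≤ ∑ c ∈ t, f c := by
      calc 2 * t.card = ∑ _c ∈ t, 2 := by rw [Finset.sum_const, smul_eq_mul, mul_comm]
      _ ≤ ∑ c ∈ t, f c := Finset.sum_le_sum htmem
    have hfc0 : f c0 = 3 := by omega
    have htall : ∀ c ∈ t, f c = 2 := aux_all_eq_two t f htmem (by omega)
    refine ⟨c0, hfc0, fun c hc1 hcc0 => htall c ?_⟩
    exact Finset.mem_erase.2 ⟨hcc0, Finset.mem_erase.2 ⟨hc1, Finset.mem_univ _⟩⟩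

lemma aux_card_six (G : Type) [Group G] [Finite G] (h : Subgroup.center G = ⊥)
    (c0 : ConjClasses G) (hc0 : c0.carrier.ncard = 3)
    (hall : ∀ c : ConjClasses G, c ≠ ConjClasses.mk 1 → c ≠ c0 → c.carrier.ncard = 2) :
    Nat.card G = 6 := by
  classical
  haveI : Finite (ConjAct G) := inferInstanceAs (Finite G)
  set n := Nat.card G with hn
  have hle3 : ∀ x : G, (stabilizer (ConjAct G) x).index ≤ 3 := by
    intro x
    rw [← aux_ncard_eq_index]
    by_cases h1 : ConjClasses.mk x = ConjClasses.mk (1 : G)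
    · rw [h1, aux_mk_one_ncard]; omega
    by_cases h2 : ConjClasses.mk x = c0
    · rw [h2, hc0]
    · rw [hall _ h1 h2]; omega
  have hxone : ∀ x : G, (stabilizer (ConjAct G) x).index ≤ 1 → x = 1 := by
    intro x hx
    have := aux_eq_one_class h (ConjClasses.mk x) (by rw [aux_ncard_eq_index]; exact hx)
    rwa [ConjClasses.mk_eq_mk_iff_isConj, isConj_one_left] at this
  have hpos : ∀ x : G, (stabilizer (ConjAct G) x).index ≠ 0 := fun x =>
    Subgroup.index_ne_zero_of_finite
  set H : Subgroup G :=
    { carrier := {x : G | (stabilizer (ConjAct G) x).index ≤ 2}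
      one_mem' := by
        have : (stabilizer (ConjAct G) (1 : G)).index = 1 := by
          rw [← aux_ncard_eq_index, aux_mk_one_ncard]
        simp only [Set.mem_setOf_eq, this]; omega
      inv_mem' := by
        intro x hx
        simp only [Set.mem_setOf_eq] at hx ⊢
        have hle : stabilizer (ConjAct G) x ≤ stabilizer (ConjAct G) x⁻¹ := by
          intro g hg
          rw [mem_stabilizer_iff] at hg ⊢
          rw [smul_inv', hg]
        have hdvd := Subgroup.index_dvd_of_le hle
        exact le_trans (Nat.le_of_dvd (Nat.pos_of_ne_zero (hpos x)) hdvd) hx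
      mul_mem' := by
        intro x y hx hy
        simp only [Set.mem_setOf_eq] at hx hy ⊢
        by_contra hd2
        have hd3 : (stabilizer (ConjAct G) (x * y)).index = 3 :=
          le_antisymm (hle3 _) (by omega)
        have hle : stabilizer (ConjAct G) x ⊓ stabilizer (ConjAct G) y ≤
            stabilizer (ConjAct G) (x * y) := by
          intro g hg
          rw [Subgroup.mem_inf, mem_stabilizer_iff, mem_stabilizer_iff] at hg
          rw [mem_stabilizer_iff, smul_mul', hg.1, hg.2]
        set I := (stabilizer (ConjAct G) x ⊓ stabilizer (ConjAct G) y).index with hI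
        have hIle : I ≤ (stabilizer (ConjAct G) x).index * (stabilizer (ConjAct G) y).index :=
          Subgroup.index_inf_le
        have hIne : I ≠ 0 := Subgroup.index_ne_zero_of_finite
        have hdxy : (stabilizer (ConjAct G) (x * y)).index ∣ I := Subgroup.index_dvd_of_le hle
        rw [hd3] at hdxy
        by_cases hx1 : (stabilizer (ConjAct G) x).index ≤ 1
        · have := hxone x hx1
          rw [this, one_mul] at hd2
          exact hd2 hy
        by_cases hy1 : (stabilizer (ConjAct G) y).index ≤ 1
        · have := hxone y hy1
          rw [this, mul_one] at hd2
          exact hd2 hx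
        have hx2 : (stabilizer (ConjAct G) x).index = 2 := by omega
        have hy2 : (stabilizer (ConjAct G) y).index = 2 := by omega
        have hdx : (stabilizer (ConjAct G) x).index ∣ I :=
          Subgroup.index_dvd_of_le inf_le_left
        rw [hx2] at hdx
        rw [hx2, hy2] at hIle
        omega } with hH
  have hHcarrier : (H : Set G) = (c0.carrier)ᶜ := by
    ext x
    simp only [hH, Subgroup.coe_set_mk, Set.mem_setOf_eq, Set.mem_compl_iff,
      ConjClasses.mem_carrier_iff_mk_eq]
    change (stabilizer (ConjAct G) x).index ≤ 2 ↔ ¬ConjClasses.mk x = c0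
    rw [← aux_ncard_eq_index]
    constructor
    · intro hx hmk
      rw [hmk, hc0] at hx
      omega
    · intro hmk
      by_cases h1 : ConjClasses.mk x = ConjClasses.mk (1 : G)
      · rw [h1, aux_mk_one_ncard]; omega
      · rw [hall _ h1 hmk]
  have hHcard : Nat.card H = n - 3 := by
    have h1 : Nat.card H = (H : Set G).ncard := by
      rw [← Nat.card_coe_set_eq]
      rfl
    rw [h1, hHcarrier]
    have h2 := Set.ncard_add_ncard_compl c0.carrier
    rw [hc0] at h2
    omega
  have hHdvd : Nat.card H ∣ n := Subgroup.card_subgroup_dvd_card H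
  have h3dvd : 3 ∣ n := by
    have := aux_ncard_dvd c0
    rwa [hc0] at this
  have hnpos : 0 < n := Nat.card_pos
  have h3n : 3 ≤ n := Nat.le_of_dvd hnpos h3dvd
  have hHpos : 0 < Nat.card H := Nat.card_pos
  have hsub : n - 3 ∣ 3 := by
    have h4 : n - (n - 3) = 3 := by omega
    have h5 : Nat.card H ∣ n - 3 := by rw [hHcard]
    have h6 := Nat.dvd_sub hHdvd h5
    rw [h4, hHcard] at h6
    exact h6
  rw [hHcard] at hHpos
  have hle : n - 3 ≤ 3 := Nat.le_of_dvd (by norm_num) hsub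
  omega

lemma aux_six_iso (G : Type) [Group G] [Finite G] (h : Subgroup.center G = ⊥)
    (h6 : Nat.card G = 6) : Nonempty (G ≃* Equiv.Perm (Fin 3)) := by
  classical
  haveI : Fact (Nat.Prime 2) := ⟨Nat.prime_two⟩
  obtain ⟨b, hb⟩ := exists_prime_orderOf_dvd_card' (G := G) 2 (by rw [h6]; norm_num)
  set K := Subgroup.zpowers b with hK
  have hKcard : Nat.card K = 2 := by rw [hK, Nat.card_zpowers, hb]
  have hbne : b ≠ 1 := by
    intro e; rw [e, orderOf_one] at hb; omega
  have huniq := (Nat.card_eq_two_iff' (1 : ↥K)).1 hKcard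
  have helem : ∀ x ∈ K, x ≠ 1 → x = b := by
    intro x hx hxne
    obtain ⟨y, hy, hyuniq⟩ := huniq
    have hbK : b ∈ K := Subgroup.mem_zpowers b
    have e1 : (⟨x, hx⟩ : ↥K) = y := hyuniq _ (by simp [Subtype.ext_iff, hxne])
    have e2 : (⟨b, hbK⟩ : ↥K) = y := hyuniq _ (by simp [Subtype.ext_iff, hbne])
    have := e1.trans e2.symm
    simpa [Subtype.ext_iff] using this
  have hcore : K.normalCore = ⊥ := by
    rw [Subgroup.eq_bot_iff_forall]
    intro x hx
    by_contra hxne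
    have hxK : x ∈ K := K.normalCore_le hx
    have hxb : x = b := helem x hxK hxne
    subst hxb
    have hbcenter : x ∈ Subgroup.center G := by
      rw [Subgroup.mem_center_iff]
      intro g
      have hconj : g * x * g⁻¹ ∈ K.normalCore :=
        (Subgroup.normalCore_normal K).conj_mem x hx g
      have hconjne : g * x * g⁻¹ ≠ 1 := by
        intro e
        apply hxne
        have := congrArg (fun z => g⁻¹ * z * g) e
        simpa [mul_assoc] using this
      have := helem _ (K.normalCore_le hconj) hconjne
      calc g * x = (g * x * g⁻¹) * g := by group
      _ = x * g := by rw [this]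
    rw [h, Subgroup.mem_bot] at hbcenter
    exact hxne hbcenter
  have hindex : K.index = 3 := by
    have := Subgroup.card_mul_index K
    rw [hKcard, h6] at this
    omega
  set φ := MulAction.toPermHom G (G ⧸ K) with hφ
  have hker : φ.ker = ⊥ := by rw [← Subgroup.normalCore_eq_ker, hcore]
  have hinj : Function.Injective φ := (MonoidHom.ker_eq_bot_iff φ).1 hker
  have hqcard : Nat.card (G ⧸ K) = 3 := by rw [← Subgroup.index_eq_card, hindex]
  let e : (G ⧸ K) ≃ Fin 3 := Finite.equivFinOfCardEq hqcard
  let ψ : Equiv.Perm (G ⧸ K) ≃* Equiv.Perm (Fin 3) :=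
    { toEquiv := e.permCongr
      map_mul' := by
        intro p q
        ext x
        simp [Equiv.permCongr_apply, Equiv.Perm.mul_apply] }
  let F : G →* Equiv.Perm (Fin 3) := ψ.toMonoidHom.comp φ
  have hFinj : Function.Injective F := by
    rw [MonoidHom.coe_comp]
    exact ψ.injective.comp hinj
  have hbij : Function.Bijective F := by
    rw [Nat.bijective_iff_injective_and_card]
    refine ⟨hFinj, ?_⟩
    rw [h6, Nat.card_eq_fintype_card, Fintype.card_perm]
    simp [Nat.factorial]
  exact ⟨MulEquiv.ofBijective F hbij⟩

instance commDec3 :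
    DecidablePred fun p : Equiv.Perm (Fin 3) × Equiv.Perm (Fin 3) => Commute p.1 p.2 :=
  fun p => inferInstanceAs (Decidable (p.1 * p.2 = p.2 * p.1))

lemma aux_back (G : Type) [Group G] (e : G ≃* Equiv.Perm (Fin 3)) :
    Nat.card G = 2 * Nat.card (ConjClasses G) := by
  have hcards : Nat.card G = Nat.card (Equiv.Perm (Fin 3)) := Nat.card_congr e.toEquiv
  have hperm : Nat.card (Equiv.Perm (Fin 3)) = 6 := by
    rw [Nat.card_eq_fintype_card, Fintype.card_perm]
    simp [Nat.factorial]
  have econj : ConjClasses G ≃ ConjClasses (Equiv.Perm (Fin 3)) :=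
    Quotient.congr e.toEquiv (by
      intro a b
      constructor
      · intro hab
        exact e.toMonoidHom.map_isConj hab
      · intro hab
        have h2 : IsConj (e.symm (e a)) (e.symm (e b)) := e.symm.toMonoidHom.map_isConj hab
        rw [MulEquiv.symm_apply_apply, MulEquiv.symm_apply_apply] at h2
        exact h2)
  have hkeq : Nat.card (ConjClasses G) = Nat.card (ConjClasses (Equiv.Perm (Fin 3))) :=
    Nat.card_congr econj
  have hcomm := card_comm_eq_card_conjClasses_mul_card (Equiv.Perm (Fin 3))
  have h18 : Nat.card {p : Equiv.Perm (Fin 3) × Equiv.Perm (Fin 3) // Commute p.1 p.2} = 18 := by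
    rw [Nat.card_eq_fintype_card]
    decide
  rw [h18, hperm] at hcomm
  rw [hcards, hperm, hkeq]
  omega

/-- If `G` is a nontrivial finite group with trivial center, then
`|G| ≥ 2·k(G)` where `k(G)` is the number of conjugacy classes of `G`, with
equality if and only if `G ≅ S₃`. -/
theorem two_mul_card_conjClasses_le_card_of_center_bot (G : Type) [Group G] [Finite G]
    [Nontrivial G] (h : Subgroup.center G = ⊥) :
    2 * Nat.card (ConjClasses G) ≤ Nat.card G ∧
      (Nat.card G = 2 * Nat.card (ConjClasses G) ↔
        Nonempty (G ≃* Equiv.Perm (Fin 3))) := by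
  obtain ⟨hle, heq⟩ := aux_main G h
  refine ⟨hle, ⟨fun he => ?_, fun ⟨e⟩ => aux_back G e⟩⟩
  obtain ⟨c0, hc0, hall⟩ := heq he
  exact aux_six_iso G h (aux_card_six G h c0 hc0 hall)
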